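/- Let P be a finite rooted poset that is a frame for wPL, i.e. a Boolean sum. Then P validates both Yankov formulas 𝒥(Q_4) and 𝒥(Q_5) if and only if P contains no 2-stack (its stack-depth is at most 1). -/

import Mathlib

/-! # Common framework: superintuitionistic logics, Kripke frames and models -/

/-! ## Intuitionistic propositional formulas -/

inductive Form : Type
  | var : ℕ → Form
  | bot : Form
  | top : Form
  | and : Form → Form → Form
  | or  : Form → Form → Form
  | imp : Form → Form → Form
deriving DecidableEq

namespace Form

/-- Implication depth of a formula. -/
def depth : Form → ℕ
  | var _ => 0
  | bot => 0
  | top => 0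
  | and φ ψ => max φ.depth ψ.depth
  | or φ ψ => max φ.depth ψ.depth
  | imp φ ψ => max φ.depth ψ.depth + 1

/-- All propositional variables of the formula are among `p_0, …, p_{m-1}`. -/
def varsLt (m : ℕ) : Form → Prop
  | var p => p < m
  | bot => True
  | top => True
  | and φ ψ => φ.varsLt m ∧ ψ.varsLt m
  | or φ ψ => φ.varsLt m ∧ ψ.varsLt m
  | imp φ ψ => φ.varsLt m ∧ ψ.varsLt m

/-- Uniform substitution. -/
def subst (σ : ℕ → Form) : Form → Form
  | var p => σ p
  | bot => bot
  | top => top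
  | and φ ψ => and (φ.subst σ) (ψ.subst σ)
  | or φ ψ => or (φ.subst σ) (ψ.subst σ)
  | imp φ ψ => imp (φ.subst σ) (ψ.subst σ)

/-- Biconditional. -/
def iff (φ ψ : Form) : Form := and (imp φ ψ) (imp ψ φ)

/-- Negation. -/
def neg (φ : Form) : Form := imp φ bot

end Form

/-! ## IPC and superintuitionistic logics -/

/-- A Hilbert-style axiomatization of intuitionistic propositional logic. -/
inductive IPC : Form → Prop
  | ax1 (φ ψ : Form) : IPC (.imp φ (.imp ψ φ))
  | ax2 (φ ψ χ : Form) :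
      IPC (.imp (.imp φ (.imp ψ χ)) (.imp (.imp φ ψ) (.imp φ χ)))
  | andE1 (φ ψ : Form) : IPC (.imp (.and φ ψ) φ)
  | andE2 (φ ψ : Form) : IPC (.imp (.and φ ψ) ψ)
  | andI (φ ψ : Form) : IPC (.imp φ (.imp ψ (.and φ ψ)))
  | orI1 (φ ψ : Form) : IPC (.imp φ (.or φ ψ))
  | orI2 (φ ψ : Form) : IPC (.imp ψ (.or φ ψ))
  | orE (φ ψ χ : Form) :
      IPC (.imp (.imp φ χ) (.imp (.imp ψ χ) (.imp (.or φ ψ) χ)))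
  | botE (φ : Form) : IPC (.imp .bot φ)
  | topI : IPC .top
  | mp (φ ψ : Form) : IPC (.imp φ ψ) → IPC φ → IPC ψ

/-- The set of theorems of IPC. -/
def IPCSet : Set Form := {φ | IPC φ}

/-- A superintuitionistic logic: a set of formulas containing all theorems of
IPC, closed under modus ponens and uniform substitution. -/
def IsSILogic (L : Set Form) : Prop :=
  IPCSet ⊆ L ∧
  (∀ φ ψ : Form, Form.imp φ ψ ∈ L → φ ∈ L → ψ ∈ L) ∧
  (∀ (φ : Form) (σ : ℕ → Form), φ ∈ L → φ.subst σ ∈ L)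

/-- `oplus L Γ` is the least superintuitionistic logic containing `L` and `Γ`
(written `L ⊕ Γ`). -/
def oplus (L Γ : Set Form) : Set Form :=
  ⋂₀ {M : Set Form | IsSILogic M ∧ L ⊆ M ∧ Γ ⊆ M}

/-- A logic is `n`-uniform if every formula is provably equivalent in it to a
formula of implication depth at most `n`. -/
def Uniform (L : Set Form) (n : ℕ) : Prop :=
  ∀ φ : Form, ∃ ψ : Form, ψ.depth ≤ n ∧ Form.iff φ ψ ∈ L

/-- A logic is locally tabular if over each finite tuple of variables there are
only finitely many formulas up to provable equivalence. -/
def LocallyTabular (L : Set Form) : Prop :=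
  ∀ m : ℕ, ∃ Φ : Finset Form, ∀ φ : Form, φ.varsLt m → ∃ ψ ∈ Φ, Form.iff φ ψ ∈ L

/-! ## Kripke frames (posets) -/

structure Frame : Type 1 where
  W : Type
  le : W → W → Prop
  refl : ∀ x, le x x
  trans : ∀ x y z, le x y → le y z → le x z
  antisymm : ∀ x y, le x y → le y x → x = y

namespace Frame

def lt (F : Frame) (a b : F.W) : Prop := F.le a b ∧ a ≠ b

/-- A valuation is persistent if it is preserved upwards. -/
def Persistent (F : Frame) (V : ℕ → F.W → Prop) : Prop :=
  ∀ p a b, F.le a b → V p a → V p b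

/-- Kripke forcing. -/
def force (F : Frame) (V : ℕ → F.W → Prop) : Form → F.W → Prop
  | .var p, w => V p w
  | .bot, _ => False
  | .top, _ => True
  | .and φ ψ, w => F.force V φ w ∧ F.force V ψ w
  | .or φ ψ, w => F.force V φ w ∨ F.force V ψ w
  | .imp φ ψ, w => ∀ v, F.le w v → F.force V φ v → F.force V ψ v

/-- `F ⊩ φ`. -/
def Valid (F : Frame) (φ : Form) : Prop :=
  ∀ V : ℕ → F.W → Prop, F.Persistent V → ∀ w : F.W, F.force V φ w

def Rooted (F : Frame) : Prop := ∃ r, ∀ w, F.le r w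

/-- The subposet on a subset of the carrier. -/
def restrict (F : Frame) (s : Set F.W) : Frame where
  W := s
  le a b := F.le a.1 b.1
  refl a := F.refl a.1
  trans a b c h1 h2 := F.trans a.1 b.1 c.1 h1 h2
  antisymm a b h1 h2 := Subtype.ext (F.antisymm a.1 b.1 h1 h2)

/-- The rooted upset `↑z`. -/
def up (F : Frame) (z : F.W) : Frame := F.restrict {w | F.le z w}

/-- There is a chain of `d` elements in `↑w` starting at `w`. -/
def hasChainUp (F : Frame) (w : F.W) (d : ℕ) : Prop :=
  ∃ f : Fin d → F.W, (∀ i : Fin d, (i : ℕ) = 0 → f i = w) ∧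
    (∀ i j : Fin d, (i : ℕ) < (j : ℕ) → F.lt (f i) (f j))

/-- The depth of `w` is `d`: the longest chain in `↑w` has exactly `d` elements. -/
def depthEq (F : Frame) (w : F.W) (d : ℕ) : Prop :=
  F.hasChainUp w d ∧ ¬ F.hasChainUp w (d + 1)

/-- The covering relation of the poset. -/
def covBy (F : Frame) (a b : F.W) : Prop :=
  F.lt a b ∧ ∀ c, F.lt a c → F.lt c b → False

end Frame

/-- A p-morphism of posets. -/
def IsPMorphism (P Q : Frame) (f : P.W → Q.W) : Prop :=
  (∀ a b, P.le a b → Q.le (f a) (f b)) ∧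
  (∀ a b, Q.le (f a) b → ∃ a', P.le a a' ∧ f a' = b)

/-- `Q` is a p-morphic image of `P`. -/
def PMorphicImage (P Q : Frame) : Prop :=
  ∃ f : P.W → Q.W, IsPMorphism P Q f ∧ Function.Surjective f

/-- Order isomorphism of posets. -/
def FrameIso (P Q : Frame) : Prop :=
  ∃ f : P.W → Q.W, Function.Bijective f ∧ ∀ a b, P.le a b ↔ Q.le (f a) (f b)

/-- The logic of a class of posets. -/
def LogK (K : Set Frame) : Set Form := {φ | ∀ F ∈ K, F.Valid φ}

/-- The logic of a single poset. -/
def FrameLog (F : Frame) : Set Form := {φ | F.Valid φ}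

/-- `J` is a Yankov formula for the finite rooted poset `Q`: a finite poset
refutes `J` exactly when `Q` is isomorphic to a rooted upset of one of its
p-morphic images. -/
def IsYankov (J : Form) (Q : Frame) : Prop :=
  ∀ P : Frame, Finite P.W →
    (¬ P.Valid J ↔ ∃ G : Frame, PMorphicImage P G ∧ ∃ z : G.W, FrameIso (G.up z) Q)

/-! ## Rooted Kripke models over `n` propositional variables -/

structure Model (n : ℕ) : Type 1 where
  W : Type
  le : W → W → Prop
  refl : ∀ x, le x x
  trans : ∀ x y z, le x y → le y z → le x z
  antisymm : ∀ x y, le x y → le y x → x = y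
  root : W
  rooted : ∀ w, le root w
  col : W → Set (Fin n)
  mono : ∀ a b, le a b → col a ⊆ col b

namespace Model

/-- The underlying poset of a model. -/
def frame {n : ℕ} (M : Model n) : Frame :=
  ⟨M.W, M.le, M.refl, M.trans, M.antisymm⟩

def force {n : ℕ} (M : Model n) : Form → M.W → Prop
  | .var p, w => ∃ h : p < n, (⟨p, h⟩ : Fin n) ∈ M.col w
  | .bot, _ => False
  | .top, _ => True
  | .and φ ψ, w => M.force φ w ∧ M.force ψ w
  | .or φ ψ, w => M.force φ w ∨ M.force ψ w
  | .imp φ ψ, w => ∀ v, M.le w v → M.force φ v → M.force ψ v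

/-- Satisfaction at the root of the model. -/
def Sat {n : ℕ} (M : Model n) (φ : Form) : Prop := M.force φ M.root

/-- (Full) bisimilarity of two rooted models. -/
def Bisim {n : ℕ} (M N : Model n) : Prop :=
  ∃ S : M.W → N.W → Prop,
    S M.root N.root ∧
    (∀ a b, S a b → M.col a = N.col b) ∧
    (∀ a b a', S a b → M.le a a' → ∃ b', N.le b b' ∧ S a' b') ∧
    (∀ a b b', S a b → N.le b b' → ∃ a', M.le a a' ∧ S a' b')

/-- `k`-bisimilarity of the points `x, y`, via a decreasing chain
`S k ⊆ ⋯ ⊆ S 0` of relations. -/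
def NBisimAt {n : ℕ} (M N : Model n) (k : ℕ) (x : M.W) (y : N.W) : Prop :=
  ∃ S : ℕ → M.W → N.W → Prop,
    (∀ j a b, S (j + 1) a b → S j a b) ∧
    S k x y ∧
    (∀ a b, S 0 a b → M.col a = N.col b) ∧
    (∀ j a b a', j < k → S (j + 1) a b → M.le a a' →
        ∃ b', N.le b b' ∧ S j a' b') ∧
    (∀ j a b b', j < k → S (j + 1) a b → N.le b b' →
        ∃ a', M.le a a' ∧ S j a' b')

/-- `k`-bisimilarity of two rooted models. -/
def NBisim {n : ℕ} (M N : Model n) (k : ℕ) : Prop :=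
  NBisimAt M N k M.root N.root

/-- The submodel on the rooted upset `↑z`. -/
def up {n : ℕ} (M : Model n) (z : M.W) : Model n where
  W := {w : M.W // M.le z w}
  le a b := M.le a.1 b.1
  refl a := M.refl a.1
  trans a b c h1 h2 := M.trans a.1 b.1 c.1 h1 h2
  antisymm a b h1 h2 := Subtype.ext (M.antisymm a.1 b.1 h1 h2)
  root := ⟨z, M.refl z⟩
  rooted w := w.2
  col a := M.col a.1
  mono a b h := M.mono a.1 b.1 h

/-- `(M, x) ≤ₖ (N, y)`: there is `z ≥ x` such that `(↑z, z)` is `k`-bisimilar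
with `(N, y)`. -/
def LeBisim {n : ℕ} (M N : Model n) (k : ℕ) : Prop :=
  ∃ z : M.W, M.le M.root z ∧ NBisim (M.up z) N k

/-- Two points of a model are bisimilar. -/
def PointsBisim {n : ℕ} (M : Model n) (a b : M.W) : Prop :=
  ∃ S : M.W → M.W → Prop,
    S a b ∧
    (∀ x y, S x y → M.col x = M.col y) ∧
    (∀ x y x', S x y → M.le x x' → ∃ y', M.le y y' ∧ S x' y') ∧
    (∀ x y y', S x y → M.le y y' → ∃ x', M.le x x' ∧ S x' y')

/-- A model over `n` variables is (`n`-)generated if it contains no two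
distinct bisimilar points. -/
def Generated {n : ℕ} (M : Model n) : Prop :=
  ∀ a b : M.W, M.PointsBisim a b → a = b

/-- Isomorphism of models: a root-preserving, color-preserving order
isomorphism. -/
def Iso {n : ℕ} (M N : Model n) : Prop :=
  ∃ f : M.W → N.W, Function.Bijective f ∧ f M.root = N.root ∧
    (∀ a b, M.le a b ↔ N.le (f a) (f b)) ∧ (∀ a, N.col (f a) = M.col a)

/-- `M` is a model over the class of posets `K`: its underlying poset is a
p-morphic image of a rooted upset of a member of `K`. -/
def InClass {n : ℕ} (K : Set Frame) (M : Model n) : Prop :=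
  ∃ F ∈ K, ∃ z : F.W, PMorphicImage (F.up z) M.frame

/-- The model on the rooted upset `↑z` of a frame `F`, with coloring `c`. -/
def ofFrame (F : Frame) (z : F.W) (n : ℕ) (c : (F.up z).W → Set (Fin n))
    (hc : ∀ a b : (F.up z).W, (F.up z).le a b → c a ⊆ c b) : Model n where
  W := (F.up z).W
  le := (F.up z).le
  refl := (F.up z).refl
  trans := (F.up z).trans
  antisymm := (F.up z).antisymm
  root := ⟨z, F.refl z⟩
  rooted w := w.2
  col := c
  mono := hc

end Model

/-! ## Boolean sums and stacks -/

/-- A (finite rooted) poset is a Boolean sum: it is rooted, covers decrease the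
depth by exactly one, and every point of depth `k+1` lies below every point of
depth `k`. -/
def IsBooleanSum (F : Frame) : Prop :=
  F.Rooted ∧
  (∀ a b da db, F.covBy a b → F.depthEq a da → F.depthEq b db → da = db + 1) ∧
  (∀ a b k, F.depthEq a (k + 1) → F.depthEq b k → F.le a b)

/-- `F` contains a `k`-stack: `k` consecutive layers (sets of points of equal
depth) each containing at least two points. -/
def HasStack (F : Frame) (k : ℕ) : Prop :=
  ∃ j : ℕ, ∀ i : ℕ, j ≤ i → i < j + k →
    ∃ a b : F.W, a ≠ b ∧ F.depthEq a i ∧ F.depthEq b i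

/-! ## The posets Q₁, …, Q₈ -/

def q1le : Fin 4 → Fin 4 → Bool := fun a b =>
  a = b || a = 0 || (a = 1 && b = 3)
def q2le : Fin 5 → Fin 5 → Bool := fun a b =>
  a = b || a = 0 || (a = 1 && (b = 3 || b = 4)) || (a = 2 && b = 4)
def q3le : Fin 5 → Fin 5 → Bool := fun a b =>
  a = b || a = 0 || (a = 1 && b = 4) || (a = 2 && (b = 3 || b = 4)) ||
    (a = 3 && b = 4)
def q4le : Fin 5 → Fin 5 → Bool := fun a b =>
  a = b || a = 0 || ((a = 1 || a = 2) && (b = 3 || b = 4))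
def q5le : Fin 6 → Fin 6 → Bool := fun a b =>
  a = b || a = 0 || b = 5 || ((a = 1 || a = 2) && (b = 3 || b = 4))
def q6le : Fin 4 → Fin 4 → Bool := fun a b =>
  a = b || a = 0 || b = 3
def q7le : Fin 5 → Fin 5 → Bool := fun a b =>
  a = b || a = 0 || (a = 1 && b = 3) || (a = 2 && b = 4)
def q8le : Fin 4 → Fin 4 → Bool := fun a b =>
  a = b || a = 0

/-- `Q₁`: root `0`; immediate successors `1`, `2`; `2` maximal; `3` the unique
(maximal) immediate successor of `1`. -/
def Q1f : Frame :=
  ⟨Fin 4, fun a b => q1le a b = true, by decide, by decide, by decide⟩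
/-- `Q₂`: root `0`; immediate successors `1`, `2`; maximal points `3`, `4`;
`1 < 3`, `1 < 4`, `2 < 4`, `2 ≮ 3`. -/
def Q2f : Frame :=
  ⟨Fin 5, fun a b => q2le a b = true, by decide, by decide, by decide⟩
/-- `Q₃`: root `0`; immediate successors `1`, `2`; `3` covers `2`; top `4`
with `1 < 4` and `3 < 4`. -/
def Q3f : Frame :=
  ⟨Fin 5, fun a b => q3le a b = true, by decide, by decide, by decide⟩
/-- `Q₄`: root `0`; `1`, `2` cover the root; maximal `3`, `4` above both `1`
and `2`. -/
def Q4f : Frame :=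
  ⟨Fin 5, fun a b => q4le a b = true, by decide, by decide, by decide⟩
/-- `Q₅`: `Q₄` with a greatest element `5` added on top. -/
def Q5f : Frame :=
  ⟨Fin 6, fun a b => q5le a b = true, by decide, by decide, by decide⟩
/-- `Q₆`: the diamond. -/
def Q6f : Frame :=
  ⟨Fin 4, fun a b => q6le a b = true, by decide, by decide, by decide⟩
/-- `Q₇`: root `0`; `1 < 3`, `2 < 4`, and no other strict relations above the
root. -/
def Q7f : Frame :=
  ⟨Fin 5, fun a b => q7le a b = true, by decide, by decide, by decide⟩
/-- `Q₈`: a root with three pairwise incomparable maximal points. -/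
def Q8f : Frame :=
  ⟨Fin 4, fun a b => q8le a b = true, by decide, by decide, by decide⟩

/-! ## Particular logics -/

/-- The one-element poset. -/
def unitFrame : Frame :=
  ⟨PUnit, fun _ _ => True, fun _ => trivial, fun _ _ _ _ _ => trivial,
    fun a b _ _ => Subsingleton.elim a b⟩

/-- The two-element chain. -/
def chain2 : Frame :=
  ⟨Bool, fun a b => a ≤ b, le_refl, fun _ _ _ => le_trans,
    fun _ _ => le_antisymm⟩

/-- Classical propositional logic: the logic of the one-element poset. -/
def CPC : Set Form := FrameLog unitFrame

/-- The logic of the two-element chain. -/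
def Sme : Set Form := FrameLog chain2

/-- The weak Peirce law `(q → p) ∨ (((p → q) → p) → p)`. -/
def wPLax : Form :=
  .or (.imp (.var 1) (.var 0))
    (.imp (.imp (.imp (.var 0) (.var 1)) (.var 0)) (.var 0))

/-- The logic `wPL = IPC ⊕ (q → p) ∨ (((p → q) → p) → p)`. -/
def wPL : Set Form := oplus IPCSet {wPLax}

/-- The bounded-width-2 axiom `⋁_{i≤2} (pᵢ → ⋁_{j≠i} pⱼ)`. -/
def bw2ax : Form :=
  .or (.imp (.var 0) (.or (.var 1) (.var 2)))
    (.or (.imp (.var 1) (.or (.var 0) (.var 2)))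
      (.imp (.var 2) (.or (.var 0) (.var 1))))

/-- The axiom `¬p ∨ ¬¬p`. -/
def kcax : Form := .or (Form.neg (.var 0)) (Form.neg (Form.neg (.var 0)))

/-- The logic `Box = wPL ⊕ bw₂ ⊕ (¬p ∨ ¬¬p)`. -/
def BoxLogic : Set Form := oplus wPL {bw2ax, kcax}

/-- The bounded-depth formulas. -/
def bd : ℕ → Form
  | 0 => .var 0
  | n + 1 => .or (.var (n + 1)) (.imp (.var (n + 1)) (bd n))

/-- The logic `BD_n = IPC ⊕ bd_n`. -/
def BD (n : ℕ) : Set Form := oplus IPCSet {bd n}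

/-- A logic is of finite depth if it contains some `BD_n`. -/
def FiniteDepth (L : Set Form) : Prop := ∃ n, BD n ⊆ L

/-! ## The Rieger–Nishimura ladder -/

/-- Points of the Rieger–Nishimura ladder: `inl k = L_k`, `inr k = R_k`. -/
abbrev RNpt : Type := ℕ ⊕ ℕ

/-- The covering relation of the Rieger–Nishimura ladder (`rnCov a b` means
`a ⋖ b`, i.e. `b` is an immediate successor of `a`). -/
inductive rnCov : RNpt → RNpt → Prop
  | ll (k : ℕ) : rnCov (.inl (k + 1)) (.inl k)
  | rr (k : ℕ) : rnCov (.inr (k + 1)) (.inr k)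
  | rl (k : ℕ) : rnCov (.inr (k + 1)) (.inl k)
  | lr (k : ℕ) : rnCov (.inl (k + 2)) (.inr k)

private def rnIdx : RNpt → ℕ
  | .inl k => 2 * k
  | .inr k => 2 * k + 1

private theorem rnCov_idx {a b : RNpt} (h : rnCov a b) : rnIdx b < rnIdx a := by
  cases h <;> simp [rnIdx] <;> omega

private theorem rnLe_idx {a b : RNpt} (h : Relation.ReflTransGen rnCov a b) :
    rnIdx b ≤ rnIdx a := by
  induction h with
  | refl => exact le_rfl
  | tail _ h₂ ih => exact le_trans (le_of_lt (rnCov_idx h₂)) ih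

private theorem rnIdx_inj {a b : RNpt} (h : rnIdx a = rnIdx b) : a = b := by
  rcases a with a | a <;> rcases b with b | b <;> simp [rnIdx] at h ⊢ <;> omega

/-- The Rieger–Nishimura ladder as a poset: the order is the reflexive
transitive closure of the covering relation. -/
def RN : Frame where
  W := RNpt
  le a b := Relation.ReflTransGen rnCov a b
  refl _ := Relation.ReflTransGen.refl
  trans _ _ _ h1 h2 := h1.trans h2
  antisymm _ _ h1 h2 := rnIdx_inj (le_antisymm (rnLe_idx h2) (rnLe_idx h1))

/-! ## Combs -/

def combLe (n : ℕ) : (Fin n ⊕ Fin n) → (Fin n ⊕ Fin n) → Prop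
  | .inl i, .inl j => i ≤ j
  | .inl i, .inr j => i ≤ j
  | .inr i, .inr j => i = j
  | .inr _, .inl _ => False

/-- The `n`-comb: base points `x_1 ≤ … ≤ x_n` (encoded `inl 0, …, inl (n-1)`)
and maximal teeth `y_1, …, y_n` (encoded `inr 0, …, inr (n-1)`), with
`x_i ≤ y_j ↔ i ≤ j` and the teeth pairwise incomparable. -/
def Comb (n : ℕ) : Frame where
  W := Fin n ⊕ Fin n
  le := combLe n
  refl := by rintro (i | i) <;> simp [combLe]
  trans := by
    rintro (i | i) (j | j) (k | k) h1 h2 <;> simp only [combLe] at * <;>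
      first
        | exact le_trans h1 h2
        | exact h2 ▸ h1
  antisymm := by
    rintro (i | i) (j | j) h1 h2 <;> simp only [combLe] at * <;>
      first
        | exact congrArg Sum.inl (le_antisymm h1 h2)
        | exact congrArg Sum.inr h1

/-- A broken `m`-comb: (isomorphic to) a subposet of the `m`-comb containing
all of the base points `x_1, …, x_m`. -/
def IsBrokenComb (F : Frame) (m : ℕ) : Prop :=
  ∃ s : Set (Comb m).W, (∀ i : Fin m, Sum.inl i ∈ s) ∧
    FrameIso F ((Comb m).restrict s)

/-- The logic of the class of all combs. -/
def LFC : Set Form := LogK {F | ∃ n, F = Comb n}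

/-! ## The stacked models `M_n^k` and `N_n^k` -/

/-- Height index of a point: layer `j` (from the top) has index `j`, the root
(`none`) has index `k+1`. -/
def stackIdx (k : ℕ) : Option (Fin (k + 1) × Bool) → ℕ
  | none => k + 1
  | some (j, _) => j

/-- Size of the color (an initial segment of the variables): the left point
(`false`) of layer `j` gets `1^{n-j}0^j`, the right point (`true`) gets
`1^{n-j-1}0^{j+1}`, and the root gets `1^r0^{n-r}`. -/
def stackColSize (n k r : ℕ) : Option (Fin (k + 1) × Bool) → ℕ
  | none => r
  | some (j, false) => n - j
  | some (j, true) => n - ((j : ℕ) + 1)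

private theorem stackColSize_le (n k r : ℕ) (hr : r ≤ n - (k + 1))
    {a b : Option (Fin (k + 1) × Bool)} (h : stackIdx k b < stackIdx k a) :
    stackColSize n k r a ≤ stackColSize n k r b := by
  rcases a with _ | ⟨j, _ | _⟩ <;> rcases b with _ | ⟨j', _ | _⟩ <;>
    simp only [stackIdx, stackColSize] at * <;> omega

/-- The common shape of `M_n^k` and `N_n^k`, with root color `1^r0^{n-r}`:
`k+1` layers of two points stacked on top of a root. -/
def stackModel (n k r : ℕ) (hr : r ≤ n - (k + 1)) : Model n where
  W := Option (Fin (k + 1) × Bool)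
  le a b := a = b ∨ stackIdx k b < stackIdx k a
  refl _ := Or.inl rfl
  trans := by
    rintro a b c (rfl | h1) h2
    · exact h2
    · rcases h2 with rfl | h2
      · exact Or.inr h1
      · exact Or.inr (h2.trans h1)
  antisymm := by
    rintro a b (rfl | h1) h2
    · rfl
    · rcases h2 with rfl | h2
      · rfl
      · omega
  root := none
  rooted := by
    rintro (_ | ⟨j, s⟩)
    · exact Or.inl rfl
    · exact Or.inr j.isLt
  col a := {i : Fin n | (i : ℕ) < stackColSize n k r a}
  mono := by
    rintro a b (rfl | h) i hi
    · exact hi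
    · exact lt_of_lt_of_le hi (stackColSize_le n k r hr h)

/-- The model `M_n^k` (root color `1^{n-k-1}0^{k+1}`). -/
def Mmodel (n k : ℕ) : Model n := stackModel n k (n - (k + 1)) le_rfl

/-- The model `N_n^k` (root color `1^{n-k-2}0^{k+2}`). -/
def Nmodel (n k : ℕ) : Model n := stackModel n k (n - (k + 2)) (by omega)

/-! ## The frames `S_n` -/

/-- Height index in `S_n`: the top point (`some none`) has index `0`, the two
points of the `j`-th middle layer have index `j+1`, and the root (`none`) has
index `n`. -/
def sIdx (n : ℕ) : Option (Option (Fin (n - 1) × Bool)) → ℕ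
  | none => n
  | some none => 0
  | some (some (j, _)) => (j : ℕ) + 1

/-- The frame `S_n` (for `n ≥ 2`): the Boolean sum whose layers from top to
bottom have sizes `1, 2, …, 2, 1` (with `n - 1` layers of size `2`). -/
def SFrame (n : ℕ) : Frame where
  W := Option (Option (Fin (n - 1) × Bool))
  le a b := a = b ∨ sIdx n b < sIdx n a
  refl _ := Or.inl rfl
  trans := by
    rintro a b c (rfl | h1) h2
    · exact h2
    · rcases h2 with rfl | h2
      · exact Or.inr h1
      · exact Or.inr (h2.trans h1)
  antisymm := by
    rintro a b (rfl | h1) h2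
    · rfl
    · rcases h2 with rfl | h2
      · rfl
      · omega
namespace S7

variable (F : Frame)

theorem lt_trans' {a b c : F.W} (h1 : F.lt a b) (h2 : F.lt b c) : F.lt a c := by
  refine ⟨F.trans _ _ _ h1.1 h2.1, fun h => ?_⟩
  subst h
  exact h2.2 (F.antisymm _ _ h2.1 h1.1)

theorem lt_of_lt_of_le' {a b c : F.W} (h1 : F.lt a b) (h2 : F.le b c) : F.lt a c := by
  refine ⟨F.trans _ _ _ h1.1 h2, fun h => ?_⟩
  subst h
  exact h1.2 (F.antisymm _ _ h1.1 h2)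

theorem chain_trunc {w : F.W} {n m : ℕ} (h : F.hasChainUp w n) (hm : m ≤ n) :
    F.hasChainUp w m := by
  obtain ⟨f, h0, hlt⟩ := h
  exact ⟨fun i => f ⟨i, lt_of_lt_of_le i.2 hm⟩, fun i hi => h0 _ hi, fun i j hij => hlt _ _ hij⟩

theorem chain_bound (hfin : Finite F.W) {w : F.W} {n : ℕ} (h : F.hasChainUp w n) :
    n ≤ Nat.card F.W := by
  obtain ⟨f, _, hlt⟩ := h
  have hinj : Function.Injective f := by
    intro i j hij
    by_contra hne
    have : (i:ℕ) ≠ (j:ℕ) := fun h => hne (Fin.ext h)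
    rcases Ne.lt_or_gt this with h | h
    · exact (hlt i j h).2 hij
    · exact (hlt j i h).2 hij.symm
  calc n = Nat.card (Fin n) := by simp
  _ ≤ Nat.card F.W := Nat.card_le_card_of_injective f hinj

theorem chain_one (w : F.W) : F.hasChainUp w 1 := by
  refine ⟨fun _ => w, fun _ _ => rfl, fun i j h => ?_⟩
  have := i.2; have := j.2; omega

theorem exists_depthEq (hfin : Finite F.W) (w : F.W) : ∃ d, F.depthEq w d := by
  have hbdd : BddAbove {n | F.hasChainUp w n} := ⟨Nat.card F.W, fun n hn => chain_bound F hfin hn⟩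
  have hne : {n | F.hasChainUp w n}.Nonempty := ⟨1, chain_one F w⟩
  refine ⟨sSup {n | F.hasChainUp w n}, Nat.sSup_mem hne hbdd, fun hc => ?_⟩
  have := le_csSup hbdd hc
  omega

theorem depthEq_unique {w : F.W} {d d' : ℕ} (h : F.depthEq w d) (h' : F.depthEq w d') :
    d = d' := by
  by_contra hne
  rcases Nat.lt_or_ge d d' with hlt | hge
  · exact h.2 (chain_trunc F h'.1 (by omega))
  · exact h'.2 (chain_trunc F h.1 (by omega))

noncomputable def dep (hfin : Finite F.W) (w : F.W) : ℕ :=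
  Classical.choose (exists_depthEq F hfin w)

theorem dep_spec (hfin : Finite F.W) (w : F.W) : F.depthEq w (dep F hfin w) :=
  Classical.choose_spec (exists_depthEq F hfin w)

theorem dep_eq (hfin : Finite F.W) {w : F.W} {d : ℕ} (h : F.depthEq w d) :
    dep F hfin w = d := depthEq_unique F (dep_spec F hfin w) h

theorem dep_pos (hfin : Finite F.W) (w : F.W) : 1 ≤ dep F hfin w := by
  by_contra h
  have h0 : dep F hfin w = 0 := by omega
  have := (dep_spec F hfin w).2
  rw [h0] at this
  exact this (chain_one F w)

theorem chain_prepend {x y : F.W} {d : ℕ} (hxy : F.lt x y) (h : F.hasChainUp y d) :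
    F.hasChainUp x (d + 1) := by
  obtain ⟨f, h0, hlt⟩ := h
  refine ⟨fun i => if h : (i:ℕ) = 0 then x else f ⟨(i:ℕ)-1, by omega⟩, ?_, ?_⟩
  · intro i hi; simp [hi]
  · intro i j hij
    have hj : (j:ℕ) ≠ 0 := by omega
    by_cases hi : (i:ℕ) = 0
    · simp only [hi, hj, dif_pos, dif_neg, not_false_iff]
      rcases Nat.eq_or_lt_of_le (by omega : 1 ≤ (j:ℕ)) with h1 | h1
      · have : f ⟨(j:ℕ)-1, by omega⟩ = y := h0 _ (by simp; omega)
        rw [this]; exact hxy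
      · refine lt_of_lt_of_le' F hxy ?_
        have hd : 0 < d := by omega
        have : f ⟨0, hd⟩ = y := h0 _ rfl
        rw [← this]
        exact (hlt ⟨0, hd⟩ _ (by simp; omega)).1
    · simp only [hi, hj, dif_neg, not_false_iff]
      exact hlt _ _ (by simp; omega)

theorem dep_lt_of_lt (hfin : Finite F.W) {x y : F.W} (hxy : F.lt x y) :
    dep F hfin y < dep F hfin x := by
  have hchain := chain_prepend F hxy (dep_spec F hfin y).1
  by_contra hle
  exact (dep_spec F hfin x).2 (chain_trunc F hchain (by omega))

theorem dep_le_of_le (hfin : Finite F.W) {x y : F.W} (hxy : F.le x y) :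
    dep F hfin y ≤ dep F hfin x := by
  by_cases h : x = y
  · subst h; exact le_rfl
  · exact le_of_lt (dep_lt_of_lt F hfin ⟨hxy, h⟩)

end S7
namespace S7

variable (F : Frame)

theorem depth_chain_elt (hfin : Finite F.W) {w : F.W} {d : ℕ} (hw : F.depthEq w d)
    (f : Fin d → F.W) (h0 : ∀ i : Fin d, (i:ℕ) = 0 → f i = w)
    (hlt : ∀ i j : Fin d, (i:ℕ) < (j:ℕ) → F.lt (f i) (f j)) (i : Fin d) :
    F.depthEq (f i) (d - (i:ℕ)) := by
  constructor
  · refine ⟨fun j => f ⟨(i:ℕ) + (j:ℕ), by omega⟩, ?_, ?_⟩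
    · intro j hj
      congr 1
      simp [hj]
    · intro j j' hjj
      exact hlt _ _ (by simp; omega)
  · rintro ⟨g, g0, glt⟩
    -- build chain of length d+1 at w
    have hcomb : F.hasChainUp w (d + 1) := by
      refine ⟨fun j => if hj : (j:ℕ) < (i:ℕ) then f ⟨(j:ℕ), by omega⟩
        else g ⟨(j:ℕ) - (i:ℕ), by omega⟩, ?_, ?_⟩
      · intro j hj
        dsimp only
        by_cases h : (j:ℕ) < (i:ℕ)
        · rw [dif_pos h]
          exact h0 _ (by simp [hj])
        · rw [dif_neg h]
          refine (g0 _ ?_).trans (h0 i (by omega))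
          simp [hj]
      · intro j j' hjj
        dsimp only
        by_cases h1 : (j:ℕ) < (i:ℕ) <;> by_cases h2 : (j':ℕ) < (i:ℕ)
        · rw [dif_pos h1, dif_pos h2]
          exact hlt _ _ (by simp; omega)
        · -- j < i ≤ j'
          rw [dif_pos h1, dif_neg h2]
          have hfj : F.lt (f ⟨(j:ℕ), by omega⟩) (f i) := hlt _ _ (by simp; omega)
          have hg0 : g ⟨0, by omega⟩ = f i := g0 _ rfl
          rcases Nat.eq_or_lt_of_le (by omega : (i:ℕ) ≤ (j':ℕ)) with he | he
          · have heq : (⟨(j':ℕ) - (i:ℕ), by omega⟩ : Fin (d - (i:ℕ) + 1)) = ⟨0, by omega⟩ := by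
              apply Fin.ext
              simp
              omega
            rw [heq, hg0]
            exact hfj
          · refine lt_of_lt_of_le' F hfj ?_
            rw [← hg0]
            exact (glt ⟨0, by omega⟩ _ (by simp; omega)).1
        · omega
        · rw [dif_neg h1, dif_neg h2]
          exact glt _ _ (by simp; omega)
    exact hw.2 hcomb

theorem le_of_dep_lt (hfin : Finite F.W) (hBS : IsBooleanSum F) {x y : F.W}
    (h : dep F hfin y < dep F hfin x) : F.le x y := by
  suffices hs : ∀ n x, dep F hfin x = dep F hfin y + 1 + n → F.le x y by
    exact hs (dep F hfin x - dep F hfin y - 1) x (by omega)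
  intro n
  induction n with
  | zero =>
    intro x hn
    have hy := dep_spec F hfin y
    have hx := dep_spec F hfin x
    rw [hn] at hx
    exact hBS.2.2 x y _ hx hy
  | succ n ih =>
    intro x hn
    have hx := dep_spec F hfin x
    obtain ⟨f, h0, hlt⟩ := hx.1
    have hdx1 : 1 < dep F hfin x := by omega
    have hdc : F.depthEq (f ⟨1, by omega⟩) (dep F hfin x - 1) := by
      have := depth_chain_elt F hfin hx f h0 hlt ⟨1, by omega⟩
      simpa using this
    have hdc' : dep F hfin (f ⟨1, by omega⟩) = dep F hfin y + 1 + n := by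
      rw [dep_eq F hfin hdc]; omega
    have hxc : F.le x (f ⟨1, by omega⟩) := by
      have h00 : f ⟨0, by omega⟩ = x := h0 _ rfl
      have hxc := (hlt ⟨0, by omega⟩ ⟨1, by omega⟩ (by simp)).1
      rwa [h00] at hxc
    exact F.trans _ _ _ hxc (ih _ hdc')

end S7
namespace S7

variable (F : Frame)

theorem dep_le_root (hfin : Finite F.W) {r : F.W} (hr : ∀ w, F.le r w) (w : F.W) :
    dep F hfin w ≤ dep F hfin r := dep_le_of_le F hfin (hr w)

theorem eq_root_of_dep_eq (hfin : Finite F.W) {r : F.W} (hr : ∀ w, F.le r w) {w : F.W}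
    (h : dep F hfin w = dep F hfin r) : w = r := by
  by_contra hne
  have := dep_lt_of_lt F hfin ⟨hr w, fun h' => hne h'.symm⟩
  omega

theorem layer_nonempty (hfin : Finite F.W) {r : F.W} (hr : ∀ w, F.le r w) {k : ℕ}
    (hk1 : 1 ≤ k) (hk2 : k ≤ dep F hfin r) : ∃ c, dep F hfin c = k := by
  obtain ⟨f, h0, hlt⟩ := (dep_spec F hfin r).1
  refine ⟨f ⟨dep F hfin r - k, by omega⟩, ?_⟩
  have := depth_chain_elt F hfin (dep_spec F hfin r) f h0 hlt ⟨dep F hfin r - k, by omega⟩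
  rw [dep_eq F hfin this]
  simp
  omega

/-- Core lemma for the hard direction. -/
theorem stack_of_config (hfin : Finite F.W) (hBS : IsBooleanSum F) {G : Frame}
    (f : F.W → G.W) (hpm : IsPMorphism F G f) (hsurj : Function.Surjective f)
    (A1 A2 B1 B2 : G.W)
    (hAB : G.le A1 B1 ∧ G.le A1 B2 ∧ G.le A2 B1 ∧ G.le A2 B2)
    (hA : ¬ G.le A1 A2 ∧ ¬ G.le A2 A1) (hB : ¬ G.le B1 B2 ∧ ¬ G.le B2 B1)
    (hmid : ∀ w, G.le A1 w → G.le A2 w → G.le w B1 → G.le w B2 → False) :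
    HasStack F 2 := by
  obtain ⟨r, hr⟩ := hBS.1
  -- the min-depth function
  have hfib : ∀ g : G.W, {n | ∃ x, f x = g ∧ dep F hfin x = n}.Nonempty := by
    intro g
    obtain ⟨x, hx⟩ := hsurj g
    exact ⟨dep F hfin x, x, hx, rfl⟩
  set m : G.W → ℕ := fun g => sInf {n | ∃ x, f x = g ∧ dep F hfin x = n} with hm
  have hmem : ∀ g : G.W, ∃ x, f x = g ∧ dep F hfin x = m g := fun g =>
    Nat.sInf_mem (hfib g)
  have hmin : ∀ g x, f x = g → m g ≤ dep F hfin x := fun g x hx =>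
    Nat.sInf_le ⟨x, hx, rfl⟩
  -- strict decrease
  have hdec : ∀ g g', G.le g g' → g ≠ g' → m g' < m g := by
    intro g g' hle hne
    obtain ⟨x, hx, hdx⟩ := hmem g
    obtain ⟨x', hxx', hfx'⟩ := hpm.2 x g' (hx ▸ hle)
    have hxne : x ≠ x' := fun h => hne (hx ▸ h ▸ hfx' ▸ rfl)
    have := dep_lt_of_lt F hfin ⟨hxx', hxne⟩
    have := hmin g' x' hfx'
    omega
  -- incomparable implies equal min depth
  have hinc : ∀ g g', ¬ G.le g g' → ¬ G.le g' g → m g = m g' := by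
    intro g g' h1 h2
    by_contra hne
    rcases Nat.lt_or_ge (m g) (m g') with h | h
    · obtain ⟨x, hx, hdx⟩ := hmem g
      obtain ⟨x', hx', hdx'⟩ := hmem g'
      have hle : F.le x' x := le_of_dep_lt F hfin hBS (by omega)
      exact h2 (hx ▸ hx' ▸ hpm.1 x' x hle)
    · have h' : m g' < m g := by omega
      obtain ⟨x, hx, hdx⟩ := hmem g
      obtain ⟨x', hx', hdx'⟩ := hmem g'
      have hle : F.le x x' := le_of_dep_lt F hfin hBS (by omega)
      exact h1 (hx ▸ hx' ▸ hpm.1 x x' hle)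
  have hA12 : A1 ≠ A2 := fun h => hA.1 (h ▸ G.refl A1)
  have hB12 : B1 ≠ B2 := fun h => hB.1 (h ▸ G.refl B1)
  have hA1B1 : A1 ≠ B1 := fun h => hA.2 (h ▸ hAB.2.2.1)
  have hmA : m A1 = m A2 := hinc _ _ hA.1 hA.2
  have hmB : m B1 = m B2 := hinc _ _ hB.1 hB.2
  have hdlt : m B1 < m A1 := hdec _ _ hAB.1 hA1B1
  obtain ⟨x1, hx1, hd1⟩ := hmem A1
  obtain ⟨x2, hx2, hd2⟩ := hmem A2
  obtain ⟨x3, hx3, hd3⟩ := hmem B1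
  obtain ⟨x4, hx4, hd4⟩ := hmem B2
  -- no layer strictly between
  have hstep : m A1 = m B1 + 1 := by
    by_contra hne
    have hlt2 : m B1 + 1 < m A1 := by omega
    obtain ⟨y, hy⟩ := layer_nonempty F hfin hr (k := m B1 + 1) (by omega)
      (by have := dep_le_root F hfin hr x1; omega)
    have hy3 : F.le y x3 := le_of_dep_lt F hfin hBS (by omega)
    have hy4 : F.le y x4 := le_of_dep_lt F hfin hBS (by omega)
    have h1y : F.le x1 y := le_of_dep_lt F hfin hBS (by omega)
    have h2y : F.le x2 y := le_of_dep_lt F hfin hBS (by omega)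
    exact hmid (f y) (hx1 ▸ hpm.1 x1 y h1y) (hx2 ▸ hpm.1 x2 y h2y)
      (hx3 ▸ hpm.1 y x3 hy3) (hx4 ▸ hpm.1 y x4 hy4)
  refine ⟨m B1, fun i hi1 hi2 => ?_⟩
  have : i = m B1 ∨ i = m B1 + 1 := by omega
  rcases this with rfl | rfl
  · refine ⟨x3, x4, fun h => hB12 (hx3 ▸ hx4 ▸ h ▸ rfl), ?_, ?_⟩
    · rw [← hd3]; exact dep_spec F hfin x3
    · rw [hmB, ← hd4]; exact dep_spec F hfin x4
  · refine ⟨x1, x2, fun h => hA12 (hx1 ▸ hx2 ▸ h ▸ rfl), ?_, ?_⟩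
    · rw [← hstep, ← hd1]; exact dep_spec F hfin x1
    · rw [← hstep, hmA, ← hd2]; exact dep_spec F hfin x2

end S7
namespace S7

variable (F : Frame)

theorem refute4_to_stack (hfin : Finite F.W) (hBS : IsBooleanSum F)
    (h : ∃ G : Frame, PMorphicImage F G ∧ ∃ z : G.W, FrameIso (G.up z) Q4f) :
    HasStack F 2 := by
  obtain ⟨G, ⟨f, hpm, hsurj⟩, z, g, hbij, hord⟩ := h
  set e := Equiv.ofBijective g hbij with he
  have hge : ∀ u, g (e.symm u) = u := fun u => e.apply_symm_apply u
  set el : Fin 5 → G.W := fun v => (e.symm v).1 with hel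
  have key : ∀ u v : Fin 5, G.le (el u) (el v) ↔ q4le u v = true := by
    intro u v
    have h1 := hord (e.symm u) (e.symm v)
    erw [hge, hge] at h1
    exact h1
  apply stack_of_config F hfin hBS f hpm hsurj (el 1) (el 2) (el 3) (el 4)
  · exact ⟨(key 1 3).2 (by decide), (key 1 4).2 (by decide),
      (key 2 3).2 (by decide), (key 2 4).2 (by decide)⟩
  · exact ⟨fun hc => absurd ((key 1 2).1 hc) (by decide), fun hc => absurd ((key 2 1).1 hc) (by decide)⟩
  · exact ⟨fun hc => absurd ((key 3 4).1 hc) (by decide), fun hc => absurd ((key 4 3).1 hc) (by decide)⟩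
  · intro w h1 h2 h3 h4
    have hzw : G.le z w := G.trans _ _ _ (e.symm ((1 : Fin 5) : _)).2 h1
    set w' : (G.up z).W := ⟨w, hzw⟩ with hw'
    have k1 : q4le 1 (g w') = true := by
      have := (hord (e.symm ((1 : Fin 5) : _)) w').1 h1
      erw [hge] at this; exact this
    have k2 : q4le 2 (g w') = true := by
      have := (hord (e.symm ((2 : Fin 5) : _)) w').1 h2
      erw [hge] at this; exact this
    have k3 : q4le (g w') 3 = true := by
      have := (hord w' (e.symm ((3 : Fin 5) : _))).1 h3
      erw [hge] at this; exact this
    have k4 : q4le (g w') 4 = true := by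
      have := (hord w' (e.symm ((4 : Fin 5) : _))).1 h4
      erw [hge] at this; exact this
    exact (by decide : ∀ v : Fin 5, q4le 1 v = true → q4le 2 v = true →
      q4le v 3 = true → q4le v 4 = true → False) (g w') k1 k2 k3 k4

theorem refute5_to_stack (hfin : Finite F.W) (hBS : IsBooleanSum F)
    (h : ∃ G : Frame, PMorphicImage F G ∧ ∃ z : G.W, FrameIso (G.up z) Q5f) :
    HasStack F 2 := by
  obtain ⟨G, ⟨f, hpm, hsurj⟩, z, g, hbij, hord⟩ := h
  set e := Equiv.ofBijective g hbij with he
  have hge : ∀ u, g (e.symm u) = u := fun u => e.apply_symm_apply u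
  set el : Fin 6 → G.W := fun v => (e.symm v).1 with hel
  have key : ∀ u v : Fin 6, G.le (el u) (el v) ↔ q5le u v = true := by
    intro u v
    have h1 := hord (e.symm u) (e.symm v)
    erw [hge, hge] at h1
    exact h1
  apply stack_of_config F hfin hBS f hpm hsurj (el 1) (el 2) (el 3) (el 4)
  · exact ⟨(key 1 3).2 (by decide), (key 1 4).2 (by decide),
      (key 2 3).2 (by decide), (key 2 4).2 (by decide)⟩
  · exact ⟨fun hc => absurd ((key 1 2).1 hc) (by decide), fun hc => absurd ((key 2 1).1 hc) (by decide)⟩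
  · exact ⟨fun hc => absurd ((key 3 4).1 hc) (by decide), fun hc => absurd ((key 4 3).1 hc) (by decide)⟩
  · intro w h1 h2 h3 h4
    have hzw : G.le z w := G.trans _ _ _ (e.symm ((1 : Fin 6) : _)).2 h1
    set w' : (G.up z).W := ⟨w, hzw⟩ with hw'
    have k1 : q5le 1 (g w') = true := by
      have := (hord (e.symm ((1 : Fin 6) : _)) w').1 h1
      erw [hge] at this; exact this
    have k2 : q5le 2 (g w') = true := by
      have := (hord (e.symm ((2 : Fin 6) : _)) w').1 h2
      erw [hge] at this; exact this
    have k3 : q5le (g w') 3 = true := by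
      have := (hord w' (e.symm ((3 : Fin 6) : _))).1 h3
      erw [hge] at this; exact this
    have k4 : q5le (g w') 4 = true := by
      have := (hord w' (e.symm ((4 : Fin 6) : _))).1 h4
      erw [hge] at this; exact this
    exact (by decide : ∀ v : Fin 6, q5le 1 v = true → q5le 2 v = true →
      q5le v 3 = true → q5le v 4 = true → False) (g w') k1 k2 k3 k4

end S7
namespace S7
attribute [local instance] Classical.propDecidable

theorem q4le_zero : ∀ v : Fin 5, q4le 0 v = true := by decide
theorem q4le_refl : ∀ v : Fin 5, q4le v v = true := by decide
theorem q4_from3 : ∀ v : Fin 5, q4le 3 v = true → v = 3 := by decide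
theorem q4_from4 : ∀ v : Fin 5, q4le 4 v = true → v = 4 := by decide
theorem q4_from1 : ∀ v : Fin 5, q4le 1 v = true → v = 1 ∨ v = 3 ∨ v = 4 := by decide
theorem q4_from2 : ∀ v : Fin 5, q4le 2 v = true → v = 2 ∨ v = 3 ∨ v = 4 := by decide

theorem q5le_zero : ∀ v : Fin 6, q5le 0 v = true := by decide
theorem q5le_refl : ∀ v : Fin 6, q5le v v = true := by decide
theorem q5le_top : ∀ v : Fin 6, q5le v 5 = true := by decide
theorem q5_from5 : ∀ v : Fin 6, q5le 5 v = true → v = 5 := by decide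
theorem q5_from3 : ∀ v : Fin 6, q5le 3 v = true → v = 3 ∨ v = 5 := by decide
theorem q5_from4 : ∀ v : Fin 6, q5le 4 v = true → v = 4 ∨ v = 5 := by decide
theorem q5_from1 : ∀ v : Fin 6, q5le 1 v = true → v = 1 ∨ v = 3 ∨ v = 4 ∨ v = 5 := by decide
theorem q5_from2 : ∀ v : Fin 6, q5le 2 v = true → v = 2 ∨ v = 3 ∨ v = 4 ∨ v = 5 := by decide

variable (F : Frame)

noncomputable def fm4 (hfin : Finite F.W) (a b : F.W) (x : F.W) : Fin 5 :=
  if dep F hfin x = 1 then (if x = a then 3 else 4)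
  else if dep F hfin x = 2 then (if x = b then 1 else 2) else 0

theorem fm4_d1 (hfin : Finite F.W) {a b x : F.W} (h : dep F hfin x = 1) :
    fm4 F hfin a b x = if x = a then 3 else 4 := by
  unfold fm4; rw [if_pos h]

theorem fm4_d2 (hfin : Finite F.W) {a b x : F.W} (h : dep F hfin x = 2) :
    fm4 F hfin a b x = if x = b then 1 else 2 := by
  unfold fm4; rw [if_neg (by omega), if_pos h]

theorem fm4_d3 (hfin : Finite F.W) {a b x : F.W} (h1 : dep F hfin x ≠ 1)
    (h2 : dep F hfin x ≠ 2) : fm4 F hfin a b x = 0 := by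
  unfold fm4; rw [if_neg h1, if_neg h2]

noncomputable def fm5 (hfin : Finite F.W) (j : ℕ) (a b : F.W) (x : F.W) : Fin 6 :=
  if dep F hfin x < j then 5
  else if dep F hfin x = j then (if x = a then 3 else 4)
  else if dep F hfin x = j + 1 then (if x = b then 1 else 2) else 0

theorem fm5_dlt (hfin : Finite F.W) {j : ℕ} {a b x : F.W} (h : dep F hfin x < j) :
    fm5 F hfin j a b x = 5 := by
  unfold fm5; rw [if_pos h]

theorem fm5_dj (hfin : Finite F.W) {j : ℕ} {a b x : F.W} (h : dep F hfin x = j) :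
    fm5 F hfin j a b x = if x = a then 3 else 4 := by
  unfold fm5; rw [if_neg (by omega), if_pos h]

theorem fm5_dj1 (hfin : Finite F.W) {j : ℕ} {a b x : F.W} (h : dep F hfin x = j + 1) :
    fm5 F hfin j a b x = if x = b then 1 else 2 := by
  unfold fm5; rw [if_neg (by omega), if_neg (by omega), if_pos h]

theorem fm5_dhi (hfin : Finite F.W) {j : ℕ} {a b x : F.W} (h : j + 2 ≤ dep F hfin x) :
    fm5 F hfin j a b x = 0 := by
  unfold fm5; rw [if_neg (by omega), if_neg (by omega), if_neg (by omega)]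

theorem stack_to_refute (hfin : Finite F.W) (hBS : IsBooleanSum F) (hst : HasStack F 2) :
    (∃ G : Frame, PMorphicImage F G ∧ ∃ z : G.W, FrameIso (G.up z) Q4f) ∨
    (∃ G : Frame, PMorphicImage F G ∧ ∃ z : G.W, FrameIso (G.up z) Q5f) := by
  obtain ⟨j, hj⟩ := hst
  obtain ⟨a, a', haa, hda0, hda0'⟩ := hj j le_rfl (by omega)
  obtain ⟨b, b', hbb, hdb0, hdb0'⟩ := hj (j + 1) (by omega) (by omega)
  have hda : dep F hfin a = j := dep_eq F hfin hda0
  have hda' : dep F hfin a' = j := dep_eq F hfin hda0'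
  have hdb : dep F hfin b = j + 1 := dep_eq F hfin hdb0
  have hdb' : dep F hfin b' = j + 1 := dep_eq F hfin hdb0'
  obtain ⟨r, hr⟩ := hBS.1
  have hj1 : 1 ≤ j := by have := dep_pos F hfin a; omega
  have hD : j + 2 ≤ dep F hfin r := by
    by_contra hc
    have h1 := dep_le_root F hfin hr b
    have h2 := dep_le_root F hfin hr b'
    have e1 : b = r := eq_root_of_dep_eq F hfin hr (by omega)
    have e2 : b' = r := eq_root_of_dep_eq F hfin hr (by omega)
    exact hbb (e1.trans e2.symm)
  by_cases hj2 : j = 1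
  · -- map onto Q4
    subst hj2
    left
    have hva : fm4 F hfin a b a = 3 := by rw [fm4_d1 F hfin hda, if_pos rfl]
    have hva' : fm4 F hfin a b a' = 4 := by
      rw [fm4_d1 F hfin hda', if_neg (Ne.symm haa)]
    have hvb : fm4 F hfin a b b = 1 := by rw [fm4_d2 F hfin hdb, if_pos rfl]
    have hvb' : fm4 F hfin a b b' = 2 := by
      rw [fm4_d2 F hfin hdb', if_neg (Ne.symm hbb)]
    have hvr : fm4 F hfin a b r = 0 := fm4_d3 F hfin (by omega) (by omega)
    refine ⟨Q4f, ⟨fm4 F hfin a b, ⟨?_, ?_⟩, ?_⟩, (0 : Fin 5),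
      Subtype.val, ⟨fun u v h => Subtype.ext h, fun v => ⟨⟨v, q4le_zero v⟩, rfl⟩⟩,
      fun u v => Iff.rfl⟩
    · -- order preserving
      intro x y hxy
      by_cases he : x = y
      · subst he; exact q4le_refl _
      have hlt := dep_lt_of_lt F hfin ⟨hxy, he⟩
      have hpy := dep_pos F hfin y
      by_cases h1 : dep F hfin x = 1
      · exfalso; omega
      by_cases h2 : dep F hfin x = 2
      · have hy1 : dep F hfin y = 1 := by omega
        rw [fm4_d2 F hfin h2, fm4_d1 F hfin hy1]
        split_ifs <;> exact show q4le _ _ = true by decide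
      · rw [fm4_d3 F hfin h1 h2]
        exact q4le_zero _
    · -- back condition
      intro x v hv
      by_cases h1 : dep F hfin x = 1
      · by_cases hxa : x = a
        · have hfx : fm4 F hfin a b x = 3 := by rw [fm4_d1 F hfin h1, if_pos hxa]
          rw [hfx] at hv
          have := q4_from3 v hv
          exact ⟨x, F.refl x, by rw [hfx, this]⟩
        · have hfx : fm4 F hfin a b x = 4 := by rw [fm4_d1 F hfin h1, if_neg hxa]
          rw [hfx] at hv
          have := q4_from4 v hv
          exact ⟨x, F.refl x, by rw [hfx, this]⟩
      by_cases h2 : dep F hfin x = 2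
      · have hxa : F.le x a := le_of_dep_lt F hfin hBS (by omega)
        have hxa' : F.le x a' := le_of_dep_lt F hfin hBS (by omega)
        by_cases hxb : x = b
        · have hfx : fm4 F hfin a b x = 1 := by rw [fm4_d2 F hfin h2, if_pos hxb]
          rw [hfx] at hv
          rcases q4_from1 v hv with rfl | rfl | rfl
          · exact ⟨x, F.refl x, hfx⟩
          · exact ⟨a, hxa, hva⟩
          · exact ⟨a', hxa', hva'⟩
        · have hfx : fm4 F hfin a b x = 2 := by rw [fm4_d2 F hfin h2, if_neg hxb]
          rw [hfx] at hv
          rcases q4_from2 v hv with rfl | rfl | rfl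
          · exact ⟨x, F.refl x, hfx⟩
          · exact ⟨a, hxa, hva⟩
          · exact ⟨a', hxa', hva'⟩
      · have hpx := dep_pos F hfin x
        have hx3 : 3 ≤ dep F hfin x := by omega
        have hfx : fm4 F hfin a b x = 0 := fm4_d3 F hfin h1 h2
        have hxa : F.le x a := le_of_dep_lt F hfin hBS (by omega)
        have hxa' : F.le x a' := le_of_dep_lt F hfin hBS (by omega)
        have hxb : F.le x b := le_of_dep_lt F hfin hBS (by omega)
        have hxb' : F.le x b' := le_of_dep_lt F hfin hBS (by omega)
        clear hv
        suffices h : ∀ v : Fin 5, ∃ x', F.le x x' ∧ fm4 F hfin a b x' = v from h v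
        intro v
        fin_cases v
        · exact ⟨x, F.refl x, hfx⟩
        · exact ⟨b, hxb, hvb⟩
        · exact ⟨b', hxb', hvb'⟩
        · exact ⟨a, hxa, hva⟩
        · exact ⟨a', hxa', hva'⟩
    · -- surjective
      suffices h : ∀ v : Fin 5, ∃ x, fm4 F hfin a b x = v from fun v => h v
      intro v
      fin_cases v
      exacts [⟨r, hvr⟩, ⟨b, hvb⟩, ⟨b', hvb'⟩, ⟨a, hva⟩, ⟨a', hva'⟩]
  · -- j ≥ 2 : map onto Q5
    right
    have hj2' : 2 ≤ j := by omega
    obtain ⟨c, hc⟩ := layer_nonempty F hfin hr (k := 1) le_rfl (by omega)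
    have hva : fm5 F hfin j a b a = 3 := by rw [fm5_dj F hfin hda, if_pos rfl]
    have hva' : fm5 F hfin j a b a' = 4 := by
      rw [fm5_dj F hfin hda', if_neg (Ne.symm haa)]
    have hvb : fm5 F hfin j a b b = 1 := by rw [fm5_dj1 F hfin hdb, if_pos rfl]
    have hvb' : fm5 F hfin j a b b' = 2 := by
      rw [fm5_dj1 F hfin hdb', if_neg (Ne.symm hbb)]
    have hvr : fm5 F hfin j a b r = 0 := fm5_dhi F hfin hD
    have hvc : fm5 F hfin j a b c = 5 := fm5_dlt F hfin (by omega)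
    refine ⟨Q5f, ⟨fm5 F hfin j a b, ⟨?_, ?_⟩, ?_⟩, (0 : Fin 6),
      Subtype.val, ⟨fun u v h => Subtype.ext h, fun v => ⟨⟨v, q5le_zero v⟩, rfl⟩⟩,
      fun u v => Iff.rfl⟩
    · -- order preserving
      intro x y hxy
      by_cases he : x = y
      · subst he; exact q5le_refl _
      have hlt := dep_lt_of_lt F hfin ⟨hxy, he⟩
      have hpy := dep_pos F hfin y
      by_cases h0 : dep F hfin x < j
      · rw [fm5_dlt F hfin h0, fm5_dlt F hfin (by omega)]
        exact show q5le 5 5 = true by decide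
      by_cases h1 : dep F hfin x = j
      · rw [fm5_dj F hfin h1, fm5_dlt F hfin (by omega)]
        split_ifs <;> exact show q5le _ 5 = true by decide
      by_cases h2 : dep F hfin x = j + 1
      · rw [fm5_dj1 F hfin h2]
        by_cases hy : dep F hfin y = j
        · rw [fm5_dj F hfin hy]
          split_ifs <;> exact show q5le _ _ = true by decide
        · rw [fm5_dlt F hfin (by omega)]
          split_ifs <;> exact show q5le _ 5 = true by decide
      · rw [fm5_dhi F hfin (by omega)]
        exact q5le_zero _
    · -- back condition
      intro x v hv
      by_cases h0 : dep F hfin x < j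
      · have hfx : fm5 F hfin j a b x = 5 := fm5_dlt F hfin h0
        rw [hfx] at hv
        have := q5_from5 v hv
        exact ⟨x, F.refl x, by rw [hfx, this]⟩
      by_cases h1 : dep F hfin x = j
      · have hxc : F.le x c := le_of_dep_lt F hfin hBS (by omega)
        by_cases hxa : x = a
        · have hfx : fm5 F hfin j a b x = 3 := by rw [fm5_dj F hfin h1, if_pos hxa]
          rw [hfx] at hv
          rcases q5_from3 v hv with rfl | rfl
          · exact ⟨x, F.refl x, hfx⟩
          · exact ⟨c, hxc, hvc⟩
        · have hfx : fm5 F hfin j a b x = 4 := by rw [fm5_dj F hfin h1, if_neg hxa]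
          rw [hfx] at hv
          rcases q5_from4 v hv with rfl | rfl
          · exact ⟨x, F.refl x, hfx⟩
          · exact ⟨c, hxc, hvc⟩
      by_cases h2 : dep F hfin x = j + 1
      · have hxa : F.le x a := le_of_dep_lt F hfin hBS (by omega)
        have hxa' : F.le x a' := le_of_dep_lt F hfin hBS (by omega)
        have hxc : F.le x c := le_of_dep_lt F hfin hBS (by omega)
        by_cases hxb : x = b
        · have hfx : fm5 F hfin j a b x = 1 := by rw [fm5_dj1 F hfin h2, if_pos hxb]
          rw [hfx] at hv
          rcases q5_from1 v hv with rfl | rfl | rfl | rfl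
          · exact ⟨x, F.refl x, hfx⟩
          · exact ⟨a, hxa, hva⟩
          · exact ⟨a', hxa', hva'⟩
          · exact ⟨c, hxc, hvc⟩
        · have hfx : fm5 F hfin j a b x = 2 := by rw [fm5_dj1 F hfin h2, if_neg hxb]
          rw [hfx] at hv
          rcases q5_from2 v hv with rfl | rfl | rfl | rfl
          · exact ⟨x, F.refl x, hfx⟩
          · exact ⟨a, hxa, hva⟩
          · exact ⟨a', hxa', hva'⟩
          · exact ⟨c, hxc, hvc⟩
      · have hx2 : j + 2 ≤ dep F hfin x := by omega
        have hfx : fm5 F hfin j a b x = 0 := fm5_dhi F hfin hx2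
        have hxa : F.le x a := le_of_dep_lt F hfin hBS (by omega)
        have hxa' : F.le x a' := le_of_dep_lt F hfin hBS (by omega)
        have hxb : F.le x b := le_of_dep_lt F hfin hBS (by omega)
        have hxb' : F.le x b' := le_of_dep_lt F hfin hBS (by omega)
        have hxc : F.le x c := le_of_dep_lt F hfin hBS (by omega)
        clear hv
        suffices h : ∀ v : Fin 6, ∃ x', F.le x x' ∧ fm5 F hfin j a b x' = v from h v
        intro v
        fin_cases v
        · exact ⟨x, F.refl x, hfx⟩
        · exact ⟨b, hxb, hvb⟩
        · exact ⟨b', hxb', hvb'⟩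
        · exact ⟨a, hxa, hva⟩
        · exact ⟨a', hxa', hva'⟩
        · exact ⟨c, hxc, hvc⟩
    · -- surjective
      suffices h : ∀ v : Fin 6, ∃ x, fm5 F hfin j a b x = v from fun v => h v
      intro v
      fin_cases v
      exacts [⟨r, hvr⟩, ⟨b, hvb⟩, ⟨b', hvb'⟩, ⟨a, hva⟩, ⟨a', hva'⟩, ⟨c, hvc⟩]

end S7

/-- Let `P` be a finite rooted poset which is a frame for
`wPL`, i.e. a Boolean sum. Then `P` validates the Yankov formulas `𝒥(Q₄)`
and `𝒥(Q₅)` iff `P` contains no `2`-stack (its stack-depth is at most `1`). -/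
theorem statement7 (P : Frame) (hfin : Finite P.W) (hBS : IsBooleanSum P)
    (J4 J5 : Form) (h4 : IsYankov J4 Q4f) (h5 : IsYankov J5 Q5f) :
    (P.Valid J4 ∧ P.Valid J5) ↔ ¬ HasStack P 2 := by
  constructor
  · rintro ⟨hv4, hv5⟩ hst
    rcases S7.stack_to_refute P hfin hBS hst with h | h
    · exact (h4 P hfin).2 h hv4
    · exact (h5 P hfin).2 h hv5
  · intro hns
    constructor
    · by_contra hnv
      exact hns (S7.refute4_to_stack P hfin hBS ((h4 P hfin).1 hnv))
    · by_contra hnv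
      exact hns (S7.refute5_to_stack P hfin hBS ((h5 P hfin).1 hnv))
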